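/- Let n be a positive integer, G a real n×n matrix, b ∈ ℝⁿ, and λ ≥ 0. Define the robust objective J(x) = sup{ ‖(G + E)x − (b + e)‖₂ : ‖E‖_F ≤ λ, ‖e‖₂ ≤ λ } and the regularized objective R(x) = ‖Gx − b‖₂ + λ‖x‖₂. Then J(x) = R(x) + λ for every x ∈ ℝⁿ, and consequently the infimum over x ∈ ℝⁿ of J equals the infimum over x ∈ ℝⁿ of R plus λ. -/

import Mathlib

/-- Euclidean norm of a vector in ℝⁿ. -/
noncomputable def eNorm {n : ℕ} (v : Fin n → ℝ) : ℝ :=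
  Real.sqrt (∑ i, v i ^ 2)

/-- Frobenius norm of a real matrix. -/
noncomputable def fNorm {m n : ℕ} (M : Matrix (Fin m) (Fin n) ℝ) : ℝ :=
  Real.sqrt (∑ i, ∑ j, M i j ^ 2)

/-- The robust objective: worst-case residual over Frobenius-bounded matrix
perturbations and Euclidean-bounded vector perturbations. -/
noncomputable def robustObj {n : ℕ} (G : Matrix (Fin n) (Fin n) ℝ)
    (b : Fin n → ℝ) (lam : ℝ) (x : Fin n → ℝ) : ℝ :=
  sSup {r : ℝ | ∃ (E : Matrix (Fin n) (Fin n) ℝ) (e : Fin n → ℝ),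
      fNorm E ≤ lam ∧ eNorm e ≤ lam ∧
      r = eNorm ((G + E).mulVec x - (b + e))}

/-- The regularized objective ‖Gx − b‖₂ + λ‖x‖₂. -/
noncomputable def regObj {n : ℕ} (G : Matrix (Fin n) (Fin n) ℝ)
    (b : Fin n → ℝ) (lam : ℝ) (x : Fin n → ℝ) : ℝ :=
  eNorm (G.mulVec x - b) + lam * eNorm x

lemma eNorm_nonneg {n : ℕ} (v : Fin n → ℝ) : 0 ≤ eNorm v := Real.sqrt_nonneg _

lemma eNorm_eq_norm {n : ℕ} (v : Fin n → ℝ) :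
    eNorm v = ‖(WithLp.equiv 2 (Fin n → ℝ)).symm v‖ := by
  unfold eNorm
  rw [EuclideanSpace.norm_eq]
  simp only [WithLp.equiv_symm_apply, WithLp.ofLp_toLp, Real.norm_eq_abs, sq_abs]

lemma eNorm_add_le {n : ℕ} (v w : Fin n → ℝ) : eNorm (v + w) ≤ eNorm v + eNorm w := by
  simp only [eNorm_eq_norm]
  exact norm_add_le ((WithLp.equiv 2 (Fin n → ℝ)).symm v) ((WithLp.equiv 2 (Fin n → ℝ)).symm w)

lemma eNorm_smul {n : ℕ} (c : ℝ) (v : Fin n → ℝ) : eNorm (c • v) = |c| * eNorm v := by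
  unfold eNorm
  rw [← Real.sqrt_sq_eq_abs, ← Real.sqrt_mul (sq_nonneg c), Finset.mul_sum]
  congr 1; apply Finset.sum_congr rfl; intro i _
  simp [Pi.smul_apply, mul_pow]

lemma eNorm_eq_zero {n : ℕ} {v : Fin n → ℝ} (h : eNorm v = 0) : v = 0 := by
  unfold eNorm at h
  have := (Real.sqrt_eq_zero (Finset.sum_nonneg fun i _ => sq_nonneg (v i))).mp h
  funext i
  have := (Finset.sum_eq_zero_iff_of_nonneg (fun i _ => sq_nonneg (v i))).mp this i (Finset.mem_univ i)
  exact pow_eq_zero_iff (by norm_num) |>.mp this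

lemma fNorm_nonneg {m n : ℕ} (M : Matrix (Fin m) (Fin n) ℝ) : 0 ≤ fNorm M := Real.sqrt_nonneg _

lemma eNorm_mulVec_le {n : ℕ} (E : Matrix (Fin n) (Fin n) ℝ) (x : Fin n → ℝ) :
    eNorm (E.mulVec x) ≤ fNorm E * eNorm x := by
  unfold eNorm fNorm
  rw [← Real.sqrt_mul (Finset.sum_nonneg fun i _ => Finset.sum_nonneg fun j _ => sq_nonneg (E i j) : (0:ℝ) ≤ ∑ i, ∑ j, E i j ^ 2)]
  apply Real.sqrt_le_sqrt
  rw [Finset.sum_mul]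
  apply Finset.sum_le_sum
  intro i _
  exact Finset.sum_mul_sq_le_sq_mul_sq Finset.univ (E i) x

lemma eNorm_single {n : ℕ} (i : Fin n) : eNorm (Pi.single i (1:ℝ)) = 1 := by
  unfold eNorm
  have : (∑ j, (Pi.single i 1 : Fin n → ℝ) j ^ 2) = 1 := by
    rw [Finset.sum_eq_single i] <;> simp +contextual [Pi.single_apply]
  rw [this, Real.sqrt_one]

lemma eNorm_neg {n : ℕ} (v : Fin n → ℝ) : eNorm (-v) = eNorm v := by
  have := eNorm_smul (-1 : ℝ) v
  simpa using this

lemma eNorm_zero {n : ℕ} : eNorm (0 : Fin n → ℝ) = 0 := by simp [eNorm]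

lemma sum_sq_eNorm {n : ℕ} (v : Fin n → ℝ) : (∑ i, v i ^ 2) = eNorm v ^ 2 :=
  (Real.sq_sqrt (Finset.sum_nonneg fun i _ => sq_nonneg _)).symm

lemma pointwise_aux {n : ℕ} (hn : 0 < n) (G : Matrix (Fin n) (Fin n) ℝ)
    (b : Fin n → ℝ) (lam : ℝ) (hlam : 0 ≤ lam) (x : Fin n → ℝ) :
    robustObj G b lam x = regObj G b lam x + lam := by
  set r := G.mulVec x - b with hr
  set u : Fin n → ℝ := if r = 0 then Pi.single ⟨0, hn⟩ 1 else (eNorm r)⁻¹ • r with hu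
  have hu1 : eNorm u = 1 := by
    rw [hu]
    split_ifs with h
    · exact eNorm_single _
    · have hpos : 0 < eNorm r := by
        rcases lt_or_eq_of_le (eNorm_nonneg r) with h' | h'
        · exact h'
        · exact absurd (eNorm_eq_zero h'.symm) h
      rw [eNorm_smul, abs_of_pos (inv_pos.mpr hpos), inv_mul_cancel₀ hpos.ne']
  have hru : r = eNorm r • u := by
    rw [hu]
    split_ifs with h
    · rw [h, eNorm_zero, zero_smul]
    · have hpos : 0 < eNorm r := by
        rcases lt_or_eq_of_le (eNorm_nonneg r) with h' | h'
        · exact h'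
        · exact absurd (eNorm_eq_zero h'.symm) h
      rw [smul_smul, mul_inv_cancel₀ hpos.ne', one_smul]
  have husq : (∑ i, u i ^ 2) = 1 := by
    rw [sum_sq_eNorm, hu1, one_pow]
  -- the target value
  set V : ℝ := eNorm r + lam * eNorm x + lam with hV
  have hVnn : 0 ≤ V := by
    have h1 := eNorm_nonneg r
    have h2 := eNorm_nonneg x
    have h3 := mul_nonneg hlam h2
    linarith
  -- key: residual for arbitrary E, e decomposes
  have hdecomp : ∀ (E : Matrix (Fin n) (Fin n) ℝ) (e : Fin n → ℝ),
      (G + E).mulVec x - (b + e) = r + E.mulVec x + (-e) := by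
    intro E e
    rw [Matrix.add_mulVec, hr]
    funext i
    simp [Matrix.add_mulVec]
    ring
  -- upper bound
  have hub : ∀ a ∈ {s : ℝ | ∃ (E : Matrix (Fin n) (Fin n) ℝ) (e : Fin n → ℝ),
      fNorm E ≤ lam ∧ eNorm e ≤ lam ∧
      s = eNorm ((G + E).mulVec x - (b + e))}, a ≤ V := by
    rintro a ⟨E, e, hE, he, rfl⟩
    rw [hdecomp]
    calc eNorm (r + E.mulVec x + (-e))
        ≤ eNorm (r + E.mulVec x) + eNorm (-e) := eNorm_add_le _ _
      _ ≤ (eNorm r + eNorm (E.mulVec x)) + eNorm e := by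
          rw [eNorm_neg]; exact add_le_add_left (eNorm_add_le _ _) _
      _ ≤ (eNorm r + fNorm E * eNorm x) + lam := by
          exact add_le_add (add_le_add_right (eNorm_mulVec_le E x) _) he
      _ ≤ (eNorm r + lam * eNorm x) + lam := by
          have := mul_le_mul_of_nonneg_right hE (eNorm_nonneg x)
          linarith
  -- the witness attaining V
  set c : ℝ := lam / eNorm x with hc
  set E₀ : Matrix (Fin n) (Fin n) ℝ := Matrix.of (fun i j => c * (u i * x j)) with hE₀
  set e₀ : Fin n → ℝ := -(lam • u) with he₀
  have hfE : fNorm E₀ ≤ lam := by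
    have hsum : ∑ i, ∑ j, (E₀ i j) ^ 2 = c ^ 2 * ((∑ i, u i ^ 2) * (∑ j, x j ^ 2)) := by
      rw [Finset.sum_mul_sum, Finset.mul_sum]
      apply Finset.sum_congr rfl; intro i _
      rw [Finset.mul_sum]
      apply Finset.sum_congr rfl; intro j _
      simp only [hE₀, Matrix.of_apply, mul_pow]
      try ring
    by_cases hx : x = 0
    · have : E₀ = 0 := by
        funext i j; simp [hE₀, hx]
      rw [this]
      have : fNorm (0 : Matrix (Fin n) (Fin n) ℝ) = 0 := by simp [fNorm]
      rw [this]; exact hlam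
    · have hxpos : 0 < eNorm x := by
        rcases lt_or_eq_of_le (eNorm_nonneg x) with h' | h'
        · exact h'
        · exact absurd (eNorm_eq_zero h'.symm) hx
      unfold fNorm
      rw [hsum, husq, one_mul, sum_sq_eNorm, hc]
      rw [div_pow]
      have heq : lam ^ 2 / eNorm x ^ 2 * eNorm x ^ 2 = lam ^ 2 :=
        div_mul_cancel₀ _ (pow_ne_zero 2 hxpos.ne')
      rw [heq, Real.sqrt_sq hlam]
  have he : eNorm e₀ ≤ lam := by
    rw [he₀, eNorm_neg, eNorm_smul, hu1, mul_one, abs_of_nonneg hlam]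
  have hEx : E₀.mulVec x = (lam * eNorm x) • u := by
    by_cases hx : x = 0
    · have h1 : eNorm x = 0 := by rw [hx, eNorm_zero]
      funext i
      simp [hE₀, Matrix.mulVec, dotProduct, hx, h1]
      exact Or.inl (Or.inr eNorm_zero)
    · have hxpos : 0 < eNorm x := by
        rcases lt_or_eq_of_le (eNorm_nonneg x) with h' | h'
        · exact h'
        · exact absurd (eNorm_eq_zero h'.symm) hx
      funext i
      simp only [Matrix.mulVec, dotProduct, hE₀, Matrix.of_apply, Pi.smul_apply, smul_eq_mul]
      have h2 : ∑ j, c * (u i * x j) * x j = c * u i * ∑ j, x j ^ 2 := by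
        rw [Finset.mul_sum]
        apply Finset.sum_congr rfl; intro j _; ring
      rw [h2, sum_sq_eNorm, hc]
      field_simp
  have hmem : V ∈ {s : ℝ | ∃ (E : Matrix (Fin n) (Fin n) ℝ) (e : Fin n → ℝ),
      fNorm E ≤ lam ∧ eNorm e ≤ lam ∧
      s = eNorm ((G + E).mulVec x - (b + e))} := by
    refine ⟨E₀, e₀, hfE, he, ?_⟩
    rw [hdecomp, hEx, he₀, neg_neg]
    have hcomb : r + (lam * eNorm x) • u + lam • u = V • u := by
      rw [hV]
      nth_rewrite 1 [hru]
      rw [← add_smul, ← add_smul]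
    rw [hcomb, eNorm_smul, hu1, mul_one, abs_of_nonneg hVnn]
  rw [show regObj G b lam x + lam = V from by rw [regObj, hV, hr]]
  unfold robustObj
  exact le_antisymm (csSup_le ⟨V, hmem⟩ hub) (le_csSup ⟨V, hub⟩ hmem)

/-- The robust objective equals the regularized objective plus λ pointwise, and
hence their infima over x differ by exactly λ. -/
theorem robust_eq_regularized_plus_lambda (n : ℕ) (hn : 0 < n)
    (G : Matrix (Fin n) (Fin n) ℝ) (b : Fin n → ℝ) (lam : ℝ) (hlam : 0 ≤ lam) :
    (∀ x : Fin n → ℝ, robustObj G b lam x = regObj G b lam x + lam) ∧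
    sInf (Set.range (robustObj G b lam)) =
      sInf (Set.range (regObj G b lam)) + lam := by
  have hpt : ∀ x, robustObj G b lam x = regObj G b lam x + lam :=
    pointwise_aux hn G b lam hlam
  refine ⟨hpt, ?_⟩
  have hfun : robustObj G b lam = (fun y => y + lam) ∘ regObj G b lam := funext hpt
  rw [hfun, Set.range_comp]
  symm
  have hbdd : BddBelow (Set.range (regObj G b lam)) := by
    refine ⟨0, ?_⟩
    rintro a ⟨x, rfl⟩
    unfold regObj
    exact add_nonneg (eNorm_nonneg _) (mul_nonneg hlam (eNorm_nonneg _))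
  exact Monotone.map_csInf_of_continuousAt (f := fun y => y + lam)
    (continuous_id.add continuous_const).continuousAt
    (fun a b h => add_le_add_left h lam)
    (Set.range_nonempty _) hbdd
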